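/- Let C be a linear [n,k] code over F_q with k < n whose covering radius satisfies R_1(C) = 1. Then for every integer t with 1 ≤ t ≤ n − k, the t-th generalized covering radius satisfies R_t(C) = t. -/

import Mathlib

/-- The `t`-th generalized covering radius of a linear code `C ⊆ F^n`;
`t = 1` gives the ordinary covering radius. -/
noncomputable def genCovRad {F : Type*} [Field F] {n : ℕ} (C : Submodule F (Fin n → F))
    (t : ℕ) : ℕ :=
  sInf { r | ∀ v : Fin t → (Fin n → F), ∃ c : Fin t → (Fin n → F),
    (∀ i, c i ∈ C) ∧ ∃ I : Finset (Fin n), I.card = r ∧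
      ∀ i j, (v i - c i) j ≠ 0 → j ∈ I }

/-- If an `[n,k]` code over `F_q` with `k < n` has covering radius `1`, then
`R_t(C) = t` for every `1 ≤ t ≤ n − k`. -/
theorem stmt8 {F : Type*} [Field F] [Fintype F] {q n k : ℕ}
    (hq : Fintype.card F = q) (hkn : k < n)
    (C : Submodule F (Fin n → F)) (hdim : Module.finrank F C = k)
    (hR1 : genCovRad C 1 = 1) :
    ∀ t : ℕ, 1 ≤ t → t ≤ n - k → genCovRad C t = t := by
  classical
  intro t ht htnk
  have htn : t ≤ n := htnk.trans (Nat.sub_le n k)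
  -- from hR1 : membership of 1 in the t=1 set
  have hne : { r | ∀ v : Fin 1 → (Fin n → F), ∃ c : Fin 1 → (Fin n → F),
      (∀ i, c i ∈ C) ∧ ∃ I : Finset (Fin n), I.card = r ∧
        ∀ i j, (v i - c i) j ≠ 0 → j ∈ I }.Nonempty := by
    by_contra h
    rw [Set.not_nonempty_iff_eq_empty] at h
    unfold genCovRad at hR1
    rw [h, Nat.sInf_empty] at hR1
    exact absurd hR1 (by norm_num)
  have h1 : ∀ w : Fin n → F, ∃ c ∈ C, ∃ I : Finset (Fin n), I.card = 1 ∧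
      ∀ j, (w - c) j ≠ 0 → j ∈ I := by
    intro w
    have hmem := Nat.sInf_mem hne
    rw [show sInf _ = genCovRad C 1 from rfl, hR1] at hmem
    obtain ⟨c, hc, I, hI, hsupp⟩ := hmem (fun _ => w)
    exact ⟨c 0, hc 0, I, hI, fun j hj => hsupp 0 j hj⟩
  refine le_antisymm ?_ ?_
  · -- upper bound: t is in the set
    apply Nat.sInf_le
    intro v
    choose c hc I hI hsupp using fun i => h1 (v i)
    have hcard : (Finset.univ.biUnion I).card ≤ t := by
      calc (Finset.univ.biUnion I).card ≤ ∑ i, (I i).card := Finset.card_biUnion_le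
        _ = ∑ _i : Fin t, 1 := by simp [hI]
        _ = t := by simp
    obtain ⟨J, hJsub, hJcard⟩ := Finset.exists_superset_card_eq hcard (by simpa using htn)
    exact ⟨c, hc, J, hJcard, fun i j hj => hJsub (Finset.mem_biUnion.2 ⟨i, Finset.mem_univ i, hsupp i j hj⟩)⟩
  · -- lower bound
    apply le_csInf ⟨t, ?_⟩
    · intro r hr
      by_contra hlt
      push_neg at hlt
      -- build t linearly independent elements of the quotient
      have hQ : Module.finrank F ((Fin n → F) ⧸ C) = n - k := by
        have := Submodule.finrank_quotient_add_finrank C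
        rw [hdim, Module.finrank_pi, Fintype.card_fin] at this
        omega
      let b := Module.finBasis F ((Fin n → F) ⧸ C)
      have hle : t ≤ Module.finrank F ((Fin n → F) ⧸ C) := by rw [hQ]; exact htnk
      let g : Fin t → (Fin n → F) ⧸ C := fun i => b ⟨i, lt_of_lt_of_le i.2 hle⟩
      have hg : LinearIndependent F g :=
        b.linearIndependent.comp _ (fun i j hij => by
          simpa [Fin.ext_iff] using hij)
      choose v hv using fun i => Submodule.Quotient.mk_surjective C (g i)
      obtain ⟨c, hc, I, hI, hsupp⟩ := hr v
      -- the span of the singles over I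
      set S : Finset (Fin n → F) := I.image (fun j => Pi.single j (1 : F)) with hS
      set W : Submodule F ((Fin n → F) ⧸ C) :=
        Submodule.map C.mkQ (Submodule.span F (S : Set (Fin n → F))) with hW
      have hgW : ∀ i, g i ∈ W := by
        intro i
        have hsum : v i - c i = ∑ j ∈ I, Pi.single j ((v i - c i) j) := by
          ext j'
          rw [Finset.sum_apply]
          by_cases h : j' ∈ I
          · rw [Finset.sum_eq_single j']
            · simp
            · intro b hb hbne; simp [Pi.single_apply, hbne]
            · intro hnot; exact absurd h hnot
          · have : (v i - c i) j' = 0 := by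
              by_contra hne'; exact h (hsupp i j' hne')
            rw [this]
            refine (Finset.sum_eq_zero ?_).symm
            intro b hb
            have : b ≠ j' := fun hbj => h (hbj ▸ hb)
            simp [Pi.single_apply, this]
        have hmemspan : v i - c i ∈ Submodule.span F (S : Set (Fin n → F)) := by
          rw [hsum]
          apply Submodule.sum_mem
          intro j hj
          have h1' : Pi.single j ((v i - c i) j) = ((v i - c i) j) • (Pi.single j (1 : F) : Fin n → F) := by
            ext j'; simp [Pi.single_apply]
          rw [h1']
          exact Submodule.smul_mem _ _ (Submodule.subset_span
            (Finset.mem_coe.2 (Finset.mem_image_of_mem _ hj)))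
        have : C.mkQ (v i - c i) = g i := by
          rw [map_sub, ← hv i]
          have : C.mkQ (c i) = 0 := (Submodule.Quotient.mk_eq_zero C).2 (hc i)
          simp [Submodule.mkQ_apply, this]
        exact this ▸ Submodule.mem_map_of_mem hmemspan
      -- linear independence inside W
      let f : Fin t → W := fun i => ⟨g i, hgW i⟩
      have hf : LinearIndependent F f :=
        LinearIndependent.of_comp W.subtype (by exact hg)
      have hcard := hf.fintype_card_le_finrank
      rw [Fintype.card_fin] at hcard
      have hWle : Module.finrank F W ≤ r := by
        calc Module.finrank F W ≤ Module.finrank F (Submodule.span F (S : Set (Fin n → F))) :=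
              Submodule.finrank_map_le _ _
          _ ≤ S.card := finrank_span_finset_le_card S
          _ ≤ I.card := by rw [hS]; exact Finset.card_image_le
          _ = r := hI
      omega
    · -- t is in the set (same as upper bound witness)
      intro v
      choose c hc I hI hsupp using fun i => h1 (v i)
      have hcard : (Finset.univ.biUnion I).card ≤ t := by
        calc (Finset.univ.biUnion I).card ≤ ∑ i, (I i).card := Finset.card_biUnion_le
          _ = ∑ _i : Fin t, 1 := by simp [hI]
          _ = t := by simp
      obtain ⟨J, hJsub, hJcard⟩ := Finset.exists_superset_card_eq hcard (by simpa using htn)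
      exact ⟨c, hc, J, hJcard, fun i j hj => hJsub (Finset.mem_biUnion.2 ⟨i, Finset.mem_univ i, hsupp i j hj⟩)⟩
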